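/- Let F be a free filter on ℕ, viewed as a subset of the Cantor space 2^ℕ via characteristic functions. If F has the Baire property, then F is meager. (Equivalently: every nonprincipal filter, as a subset of 2^ℕ, is either meager or fails to have the Baire property.) -/
import Mathlib


open Filter Set

/-- The subset of the Cantor space `ℕ → Bool` corresponding to a filter `F` on `ℕ`,
identifying a subset of `ℕ` with its characteristic function. -/
def filterSet (F : Filter ℕ) : Set (ℕ → Bool) :=
  {x | {n | x n = true} ∈ F}

/-- A set `S ⊆ 2^ℕ` has the Baire property if it is the symmetric difference of an
open set and a meager set. -/
def HasBaireProperty (S : Set (ℕ → Bool)) : Prop :=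
  ∃ U M : Set (ℕ → Bool), IsOpen U ∧ IsMeagre M ∧ S = symmDiff U M

/-- The homeomorphism of Cantor space flipping coordinates according to `g`. -/
def flipHomeo (g : ℕ → Bool) : (ℕ → Bool) ≃ₜ (ℕ → Bool) where
  toFun x := fun n => xor (g n) (x n)
  invFun x := fun n => xor (g n) (x n)
  left_inv x := by funext n; simp
  right_inv x := by funext n; simp
  continuous_toFun := continuous_pi fun n =>
    (continuous_of_discreteTopology (f := fun b => xor (g n) b)).comp (continuous_apply n)
  continuous_invFun := continuous_pi fun n =>
    (continuous_of_discreteTopology (f := fun b => xor (g n) b)).comp (continuous_apply n)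

lemma flipHomeo_mem_of_mem {F : Filter ℕ} (hfree : F ≤ Filter.cofinite)
    {g : ℕ → Bool} (hg : {n | g n = true}.Finite) {x : ℕ → Bool}
    (hx : x ∈ filterSet F) : flipHomeo g x ∈ filterSet F := by
  have hgc : {n | g n = true}ᶜ ∈ F := hfree hg.compl_mem_cofinite
  refine F.sets_of_superset (F.inter_mem hx hgc) ?_
  intro n hn
  have h1 : x n = true := hn.1
  have h2 : g n = false := by simpa using hn.2
  simp [flipHomeo, h1, h2]

lemma flipHomeo_mem_iff {F : Filter ℕ} (hfree : F ≤ Filter.cofinite)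
    {g : ℕ → Bool} (hg : {n | g n = true}.Finite) (x : ℕ → Bool) :
    flipHomeo g x ∈ filterSet F ↔ x ∈ filterSet F := by
  constructor
  · intro h
    have := flipHomeo_mem_of_mem hfree hg h
    have heq : flipHomeo g (flipHomeo g x) = x := (flipHomeo g).left_inv x
    rwa [heq] at this
  · exact flipHomeo_mem_of_mem hfree hg

lemma isMeagre_iUnion_countable {X : Type*} [TopologicalSpace X] {ι : Type*} [Countable ι]
    {s : ι → Set X} (h : ∀ i, IsMeagre (s i)) : IsMeagre (⋃ i, s i) := by
  rw [IsMeagre, compl_iUnion]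
  exact countable_iInter_mem.mpr h

/-- Every free (proper, containing all cofinite sets) filter on `ℕ` which, as a subset of
the Cantor space, has the Baire property is meager. -/
theorem free_filter_baireProperty_isMeagre (F : Filter ℕ) (hproper : F.NeBot)
    (hfree : F ≤ Filter.cofinite) (hBP : HasBaireProperty (filterSet F)) :
    IsMeagre (filterSet F) := by
  by_contra hS
  set S := filterSet F with hSdef
  obtain ⟨U, M, hU, hM, hSUM⟩ := hBP
  rcases U.eq_empty_or_nonempty with rfl | ⟨y, hy⟩
  · apply hS
    rw [hSUM]
    simpa [symmDiff] using hM
  -- find a cylinder inside U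
  obtain ⟨I, u, h1, h2⟩ := isOpen_pi_iff.mp hU y hy
  set C : Set (ℕ → Bool) := {x | ∀ i ∈ I, x i = y i} with hCdef
  have hCU : C ⊆ U := by
    intro x hx
    apply h2
    intro i hi
    rw [hx i hi]
    exact (h1 i hi).2
  have hCM : Sᶜ ∩ C ⊆ M := by
    rintro x ⟨hxS, hxC⟩
    by_contra hxM
    apply hxS
    rw [hSUM]
    exact mem_symmDiff.mpr (Or.inl ⟨hCU hxC, hxM⟩)
  -- flip maps indexed by boolean assignments on I
  set g : ({ i // i ∈ I } → Bool) → ℕ → Bool :=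
    fun σ n => if h : n ∈ I then xor (σ ⟨n, h⟩) (y n) else false with hgdef
  have hgfin : ∀ σ, {n | g σ n = true}.Finite := by
    intro σ
    apply (I.finite_toSet).subset
    intro n hn
    simp only [hgdef, mem_setOf_eq] at hn
    by_contra hnI
    rw [Finset.mem_coe] at hnI
    rw [dif_neg hnI] at hn
    exact Bool.noConfusion hn
  -- S complement is covered by finitely many images of M
  have hcover : Sᶜ ⊆ ⋃ σ, flipHomeo (g σ) ⁻¹' M := by
    intro x hx
    refine mem_iUnion.mpr ⟨fun i => x i, ?_⟩
    apply hCM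
    constructor
    · intro hmem
      exact hx ((flipHomeo_mem_iff hfree (hgfin (fun i => x ↑i)) x).mp hmem)
    · intro i hi
      show (flipHomeo _ x) i = y i
      simp only [flipHomeo, Homeomorph.homeomorph_mk_coe, Equiv.coe_fn_mk, hgdef, hi, dif_pos]
      cases x i <;> cases y i <;> rfl
  have hScM : IsMeagre Sᶜ := by
    refine (isMeagre_iUnion_countable fun σ => ?_).mono hcover
    exact hM.preimage_of_isOpenMap (flipHomeo (g σ)).continuous (flipHomeo (g σ)).isOpenMap
  -- so S is comeager; flip all coordinates and use Baire category
  have hSres : S ∈ residual (ℕ → Bool) := by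
    have := hScM
    rwa [IsMeagre, compl_compl] at this
  set c := flipHomeo (fun _ => true) with hcdef
  have hpre : c ⁻¹' S ∈ residual (ℕ → Bool) :=
    tendsto_residual_of_isOpenMap c.continuous c.isOpenMap hSres
  have hinter : S ∩ c ⁻¹' S ∈ residual (ℕ → Bool) := inter_mem hSres hpre
  obtain ⟨x, hx1, hx2⟩ := (dense_of_mem_residual hinter).nonempty
  -- x and its complement both in F: contradiction
  have hA : {n | x n = true} ∈ F := hx1
  have hB : {n | x n = false} ∈ F := by
    have : {n | (c x) n = true} ∈ F := hx2
    simpa [hcdef, flipHomeo] using this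
  have : (∅ : Set ℕ) ∈ F := by
    have h := F.inter_mem hA hB
    have : {n | x n = true} ∩ {n | x n = false} = ∅ := by
      ext n; simp only [mem_inter_iff, mem_setOf_eq, mem_empty_iff_false, iff_false]
      rintro ⟨h1, h2⟩; rw [h1] at h2; exact Bool.noConfusion h2
    rwa [this] at h
  exact hproper.ne (empty_mem_iff_bot.mp this)
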